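/- Let K ⊆ F be differential fields and y ∈ F transcendental over K satisfying y' = 𝓡(y) for a rational function 𝓡 with coefficients in K. Then the differential field K⟨y⟩ generated by y over K is isomorphic, as a differential field over K, to the field K(t) of rational functions with the unique derivation extending that of K and satisfying t' = 𝓡(t). -/

import Mathlib

/-- Liouville's Principle: if `y ∈ F` is transcendental over `K` and `y' = 𝓡(y)` for a rational
function `𝓡` over `K`, then the differential field `K⟨y⟩` generated by `y` over `K` is isomorphic
over `K` to the rational function field `K(t)` with the derivation extending that of `K` and
sending `t` to `𝓡(t)`. -/
theorem liouville_principle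
    {K F : Type*} [Field K] [Field F] [CharZero K] [Algebra K F]
    (dK : K → K) (dF : F → F)
    (hKadd : ∀ a b, dK (a + b) = dK a + dK b)
    (hKmul : ∀ a b, dK (a * b) = dK a * b + a * dK b)
    (hFadd : ∀ a b, dF (a + b) = dF a + dF b)
    (hFmul : ∀ a b, dF (a * b) = dF a * b + a * dF b)
    (hcompat : ∀ a : K, dF (algebraMap K F a) = algebraMap K F (dK a))
    (y : F) (hy : Transcendental K y)
    (𝓡 : RatFunc K)
    (hy' : dF y = Polynomial.aeval y 𝓡.num / Polynomial.aeval y 𝓡.denom)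
    -- `D` is the (unique) derivation on `K(t)` extending `dK` with `D t = 𝓡(t)`
    (D : RatFunc K → RatFunc K)
    (hDadd : ∀ a b, D (a + b) = D a + D b)
    (hDmul : ∀ a b, D (a * b) = D a * b + a * D b)
    (hDC : ∀ c : K, D (RatFunc.C c) = RatFunc.C (dK c))
    (hDX : D RatFunc.X = 𝓡) :
    ∃ φ : RatFunc K →+* F,
      (∀ c : K, φ (RatFunc.C c) = algebraMap K F c) ∧
      φ RatFunc.X = y ∧
      (∀ R : RatFunc K, dF (φ R) = φ (D R)) ∧
      -- the image of `φ` is exactly `K⟨y⟩`, the smallest differential subfield of `F`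
      -- containing `K` and `y`
      (∀ x : F, x ∈ Set.range φ ↔
        ∀ S : Subfield F, (∀ z ∈ S, dF z ∈ S) →
          (∀ c : K, algebraMap K F c ∈ S) → y ∈ S → x ∈ S) := by
  classical
  have hinj : Function.Injective ((Polynomial.aeval y : Polynomial K →ₐ[K] F) : Polynomial K →+* F) := by
    rw [transcendental_iff_injective] at hy
    exact hy
  let φ : RatFunc K →+* F := IsFractionRing.lift (K := RatFunc K) hinj
  have hφp : ∀ p : Polynomial K, φ (algebraMap (Polynomial K) (RatFunc K) p) =
      Polynomial.aeval y p := fun p => IsFractionRing.lift_algebraMap hinj p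
  have hφC : ∀ c : K, φ (RatFunc.C c) = algebraMap K F c := by
    intro c
    rw [← RatFunc.algebraMap_C, hφp, Polynomial.aeval_C]
  have hφX : φ RatFunc.X = y := by
    rw [← RatFunc.algebraMap_X, hφp, Polynomial.aeval_X]
  have hφR : ∀ R : RatFunc K,
      φ R = Polynomial.aeval y R.num / Polynomial.aeval y R.denom := by
    intro R
    rw [← hφp, ← hφp, ← map_div₀, RatFunc.num_div_denom]
  -- P : the derivation-commuting property
  set P : RatFunc K → Prop := fun R => dF (φ R) = φ (D R) with hP
  have Padd : ∀ a b, P a → P b → P (a + b) := by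
    intro a b ha hb
    simp only [hP, map_add, hFadd, hDadd, ha, hb]
    rw [show dF (φ a) = φ (D a) from ha, show dF (φ b) = φ (D b) from hb]
  have Pmul : ∀ a b, P a → P b → P (a * b) := by
    intro a b ha hb
    simp only [hP, map_mul, hFmul, hDmul, map_add, ha, hb]
    rw [show dF (φ a) = φ (D a) from ha, show dF (φ b) = φ (D b) from hb]
  have PC : ∀ c : K, P (RatFunc.C c) := by
    intro c
    simp only [hP, hφC, hcompat, hDC]
  have PX : P RatFunc.X := by
    simp only [hP, hφX, hy', hDX, hφR 𝓡]
  have Ppoly : ∀ p : Polynomial K, P (algebraMap (Polynomial K) (RatFunc K) p) := by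
    intro p
    induction p using Polynomial.induction_on with
    | C c => rw [RatFunc.algebraMap_C]; exact PC c
    | add p q hp hq => rw [map_add]; exact Padd _ _ hp hq
    | monomial n a ih =>
        have : algebraMap (Polynomial K) (RatFunc K) (Polynomial.C a * Polynomial.X ^ (n + 1)) =
            (algebraMap (Polynomial K) (RatFunc K) (Polynomial.C a * Polynomial.X ^ n)) *
              RatFunc.X := by
          rw [← RatFunc.algebraMap_X, ← map_mul]
          ring_nf
        rw [this]
        exact Pmul _ _ ih PX
  have haevaly : ∀ p : Polynomial K, p ≠ 0 → Polynomial.aeval y p ≠ 0 := by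
    intro p hp h0
    exact hp (hinj (by simpa using h0))
  have Pall : ∀ R : RatFunc K, P R := by
    intro R
    have hd : (algebraMap (Polynomial K) (RatFunc K) R.denom) ≠ 0 := by
      simpa using RatFunc.denom_ne_zero R
    have hRd : R * algebraMap (Polynomial K) (RatFunc K) R.denom =
        algebraMap (Polynomial K) (RatFunc K) R.num := by
      exact ((div_eq_iff hd).mp (RatFunc.num_div_denom R)).symm
    have hnum := Ppoly R.num
    have hden := Ppoly R.denom
    rw [← hRd] at hnum
    -- unfold P at hnum using product rules
    have h1 : dF (φ R) * φ (algebraMap (Polynomial K) (RatFunc K) R.denom) +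
        φ R * dF (φ (algebraMap (Polynomial K) (RatFunc K) R.denom)) =
        φ (D R) * φ (algebraMap (Polynomial K) (RatFunc K) R.denom) +
        φ R * φ (D (algebraMap (Polynomial K) (RatFunc K) R.denom)) := by
      have := hnum
      simp only [hP, map_mul, hFmul, hDmul, map_add] at this
      linear_combination this
    rw [hden] at h1
    have hφd : φ (algebraMap (Polynomial K) (RatFunc K) R.denom) ≠ 0 := by
      rw [hφp]
      exact haevaly _ (RatFunc.denom_ne_zero R)
    have h2 : (dF (φ R) - φ (D R)) * φ (algebraMap (Polynomial K) (RatFunc K) R.denom) = 0 := by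
      linear_combination h1
    rcases mul_eq_zero.mp h2 with h | h
    · have := sub_eq_zero.mp h
      exact this
    · exact absurd h hφd
  refine ⟨φ, hφC, hφX, Pall, ?_⟩
  intro x
  constructor
  · rintro ⟨R, rfl⟩ S hSd hSC hSy
    have hpoly : ∀ p : Polynomial K, Polynomial.aeval y p ∈ S := by
      intro p
      induction p using Polynomial.induction_on with
      | C c => simpa using hSC c
      | add p q hp hq => rw [map_add]; exact S.add_mem hp hq
      | monomial n a ih =>
          have : Polynomial.aeval y (Polynomial.C a * Polynomial.X ^ (n + 1)) =
              Polynomial.aeval y (Polynomial.C a * Polynomial.X ^ n) * y := by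
            rw [pow_succ, ← mul_assoc, map_mul, Polynomial.aeval_X]
          rw [this]
          exact S.mul_mem ih hSy
    rw [hφR]
    exact S.div_mem (hpoly _) (hpoly _)
  · intro h
    have := h φ.fieldRange ?_ ?_ ?_
    · rcases RingHom.mem_fieldRange.mp this with ⟨R, hR⟩
      exact ⟨R, hR⟩
    · rintro z hz
      rcases RingHom.mem_fieldRange.mp hz with ⟨R, rfl⟩
      rw [Pall R]
      exact RingHom.mem_fieldRange.mpr ⟨D R, rfl⟩
    · intro c
      exact RingHom.mem_fieldRange.mpr ⟨RatFunc.C c, hφC c⟩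
    · exact RingHom.mem_fieldRange.mpr ⟨RatFunc.X, hφX⟩
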